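/- Let Z = {z_n} be a sequence in the unit disc that is sampling for U, i.e., there is C ∈ (0,1) with sup_{n≠m} β(f(z_n), f(z_m))/β(z_n, z_m) ≥ C·N(f) for all analytic self-maps f of D, where N(f) = sup_z |f^h(z)|. Then Z is R-dense for some R > 0: every hyperbolic disc of radius greater than R meets Z. -/

import Mathlib

open Complex Set ComplexConjugate

noncomputable section

/-- The open unit disc in ℂ. -/
def unitDisc : Set ℂ := {z : ℂ | ‖z‖ < 1}

/-- Pseudohyperbolic distance ρ(a,b) = |(a-b)/(1 - conj b · a)|. -/
def pd (a b : ℂ) : ℝ := ‖(a - b) / (1 - conj b * a)‖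

/-- Hyperbolic distance β = log((1+ρ)/(1-ρ)). -/
def hd (a b : ℂ) : ℝ := Real.log ((1 + pd a b) / (1 - pd a b))

/-- The complex pseudohyperbolic "bracket" [a,b] = (b-a)/(1 - conj b · a). -/
def hbr (a b : ℂ) : ℂ := (b - a) / (1 - conj b * a)

/-- f is an analytic self-map of the unit disc. -/
def IsSelfMap (f : ℂ → ℂ) : Prop :=
  DifferentiableOn ℂ f unitDisc ∧ Set.MapsTo f unitDisc unitDisc

/-- Hyperbolic derivative f^h(z) = (1-|z|²) f'(z) / (1-|f z|²). -/
def hypDeriv (f : ℂ → ℂ) (z : ℂ) : ℂ :=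
  (1 - (‖z‖ : ℂ) ^ 2) * deriv f z / (1 - (‖f z‖ : ℂ) ^ 2)

/-- N(f) = sup over the disc of the modulus of the hyperbolic derivative. -/
def Nf (f : ℂ → ℂ) : ℝ := ⨆ z ∈ unitDisc, ‖hypDeriv f z‖

/-- sup_{n ≠ m} β(f(z_n), f(z_m))/β(z_n, z_m). -/
def sampSup (Z : ℕ → ℂ) (f : ℂ → ℂ) : ℝ :=
  sSup {t : ℝ | ∃ n m : ℕ, n ≠ m ∧ t = hd (f (Z n)) (f (Z m)) / hd (Z n) (Z m)}

/-- Z is a sampling sequence for 𝒰 with constant C. -/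
def IsSamplingSeq (Z : ℕ → ℂ) (C : ℝ) : Prop :=
  ∀ f : ℂ → ℂ, IsSelfMap f → C * Nf f ≤ sampSup Z f

lemma normSq_identity (a b : ℂ) :
    Complex.normSq (1 - conj b * a) - Complex.normSq (a - b)
      = (1 - Complex.normSq a) * (1 - Complex.normSq b) := by
  simp [Complex.normSq_apply, Complex.mul_re, Complex.mul_im, Complex.sub_re, Complex.sub_im]
  ring

lemma one_sub_ne {a b : ℂ} (ha : ‖a‖ < 1) (hb : ‖b‖ < 1) :
    1 - conj b * a ≠ 0 := by
  intro h
  have : ‖conj b * a‖ < 1 := by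
    rw [norm_mul, Complex.norm_conj]
    nlinarith [norm_nonneg a, norm_nonneg b]
  rw [sub_eq_zero] at h
  rw [← h] at this
  simp at this

lemma pd_nonneg (a b : ℂ) : 0 ≤ pd a b := norm_nonneg _

lemma pd_lt_one {a b : ℂ} (ha : ‖a‖ < 1) (hb : ‖b‖ < 1) :
    pd a b < 1 := by
  have hne := one_sub_ne ha hb
  have h1 : Complex.normSq (a - b) < Complex.normSq (1 - conj b * a) := by
    have := normSq_identity a b
    have h2 : Complex.normSq a < 1 := by
      rw [← Complex.sq_norm]; nlinarith [norm_nonneg a]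
    have h3 : Complex.normSq b < 1 := by
      rw [← Complex.sq_norm]; nlinarith [norm_nonneg b]
    nlinarith
  have h4 : ‖a - b‖ < ‖1 - conj b * a‖ := by
    rw [Complex.norm_def, Complex.norm_def]
    exact Real.sqrt_lt_sqrt (Complex.normSq_nonneg _) h1
  rw [pd, norm_div, div_lt_one]
  · exact h4
  · exact norm_pos_iff.mpr hne

lemma pd_symm (a b : ℂ) : pd a b = pd b a := by
  unfold pd
  rw [norm_div, norm_div]
  congr 1
  · rw [show a - b = -(b-a) by ring, norm_neg]
  · rw [← Complex.norm_conj (1 - conj a * b)]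
    congr 1
    simp
    ring

lemma hd_nonneg {a b : ℂ} (h : pd a b < 1) : 0 ≤ hd a b := by
  unfold hd
  apply Real.log_nonneg
  rw [le_div_iff₀ (by linarith)]
  nlinarith [pd_nonneg a b]

lemma hd_ge_pd {a b : ℂ} (h : pd a b < 1) : pd a b ≤ hd a b := by
  unfold hd
  have h0 := pd_nonneg a b
  set ρ := pd a b
  have h1 : 0 < 1 - ρ := by linarith
  rw [Real.log_div (by linarith) (by linarith)]
  have h2 : Real.log (1 - ρ) ≤ -ρ := by
    have := Real.log_le_sub_one_of_pos h1
    linarith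
  have h3 : 0 ≤ Real.log (1 + ρ) := Real.log_nonneg (by linarith)
  linarith

lemma hd_le_five {a b : ℂ} (h0 : pd a b ≤ 8/15) : hd a b ≤ 5 * pd a b := by
  unfold hd
  have hn := pd_nonneg a b
  set ρ := pd a b
  have h1 : 0 < 1 - ρ := by linarith
  have h2 : 0 < (1+ρ)/(1-ρ) := by positivity
  have h3 := Real.log_le_sub_one_of_pos h2
  have h4 : (1+ρ)/(1-ρ) - 1 ≤ 5 * ρ := by
    rw [div_sub_one (by linarith), div_le_iff₀ h1]
    nlinarith
  linarith

lemma pd_self (a : ℂ) : pd a a = 0 := by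
  simp [pd]

lemma hd_self (a : ℂ) : hd a a = 0 := by
  simp [hd, pd_self]

def mob (w z : ℂ) : ℂ := (z - w) / (1 - conj w * z)

lemma abs_mob {w z : ℂ} (hw : ‖w‖ < 1) (hz : ‖z‖ < 1) :
    ‖mob w z‖ = pd z w := by
  rfl

lemma pd_mob {w a b : ℂ} (hw : ‖w‖ < 1) (ha : ‖a‖ < 1)
    (hb : ‖b‖ < 1) : pd (mob w a) (mob w b) = pd a b := by
  have hwa : (1 : ℂ) - conj w * a ≠ 0 := one_sub_ne ha hw
  have hwb : (1 : ℂ) - conj w * b ≠ 0 := one_sub_ne hb hw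
  have hww : (1 : ℂ) - conj w * w ≠ 0 := one_sub_ne hw hw
  have hwb' : (1 : ℂ) - w * conj b ≠ 0 := by
    intro h
    apply hwb
    have := congrArg conj h
    simpa [mul_comm] using this
  have e1 : mob w a - mob w b
      = ((a - b) * (1 - conj w * w)) / ((1 - conj w * a) * (1 - conj w * b)) := by
    unfold mob
    rw [div_sub_div _ _ hwa hwb]
    ring
  have e2 : (1 : ℂ) - conj (mob w b) * mob w a
      = ((1 - conj b * a) * (1 - conj w * w)) / ((1 - w * conj b) * (1 - conj w * a)) := by
    unfold mob
    rw [map_div₀]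
    simp only [map_sub, map_one, map_mul, Complex.conj_conj]
    rw [div_mul_div_comm, one_sub_div (mul_ne_zero hwb' hwa)]
    ring
  have hba : (1 : ℂ) - conj b * a ≠ 0 := one_sub_ne ha hb
  have habs : ‖1 - w * conj b‖ = ‖1 - conj w * b‖ := by
    rw [← Complex.norm_conj (1 - conj w * b)]
    congr 1
    simp
  unfold pd
  rw [norm_div, norm_div, e1, e2, norm_div, norm_div]
  simp only [norm_mul, habs]
  have p1 : ‖1 - conj w * a‖ ≠ 0 := norm_ne_zero_iff.mpr hwa
  have p2 : ‖1 - conj w * b‖ ≠ 0 := norm_ne_zero_iff.mpr hwb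
  have p3 : ‖1 - conj w * w‖ ≠ 0 := norm_ne_zero_iff.mpr hww
  have p4 : ‖1 - conj b * a‖ ≠ 0 := norm_ne_zero_iff.mpr hba
  generalize ‖1 - conj w * a‖ = A at p1 ⊢
  generalize ‖1 - conj w * b‖ = B at p2 ⊢
  generalize ‖1 - conj w * w‖ = W at p3 ⊢
  generalize ‖1 - conj b * a‖ = D at p4 ⊢
  field_simp

lemma cast_abs_sq (z : ℂ) : ((‖z‖ : ℝ) : ℂ)^2 = conj z * z := by
  rw [← Complex.ofReal_pow, Complex.sq_norm]
  rw [← Complex.normSq_eq_conj_mul_self]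

lemma abs_one_sub_abs_sq {z : ℂ} (hz : ‖z‖ < 1) :
    ‖1 - ((‖z‖ : ℝ) : ℂ)^2‖ = 1 - (‖z‖)^2 := by
  rw [← Complex.ofReal_pow, ← Complex.ofReal_one, ← Complex.ofReal_sub, Complex.norm_real, Real.norm_eq_abs]
  rw [_root_.abs_of_nonneg]
  nlinarith [norm_nonneg z]

lemma mob_hasDerivAt {w : ℂ} (z : ℂ) (hne : (1 : ℂ) - conj w * z ≠ 0) :
    HasDerivAt (mob w) ((1 - conj w * w) / (1 - conj w * z)^2) z := by
  have h1 : HasDerivAt (fun z : ℂ => z - w) 1 z := (hasDerivAt_id z).sub_const w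
  have h2 : HasDerivAt (fun z : ℂ => 1 - conj w * z) (0 - conj w * 1) z :=
    (hasDerivAt_const z 1).sub ((hasDerivAt_id z).const_mul (conj w))
  have h3 := h1.div h2 hne
  convert h3 using 1
  · rfl
  · rfl
  · rfl
  ring




def tf (w z : ℂ) : ℂ := (1/4 : ℂ) * mob w z

lemma tf_hasDerivAt {w : ℂ} (z : ℂ) (hne : (1 : ℂ) - conj w * z ≠ 0) :
    HasDerivAt (tf w) ((1/4 : ℂ) * ((1 - conj w * w) / (1 - conj w * z)^2)) z :=
  (mob_hasDerivAt z hne).const_mul (1/4 : ℂ)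

lemma abs_tf_le {w z : ℂ} (hw : ‖w‖ < 1) (hz : ‖z‖ < 1) :
    ‖tf w z‖ ≤ 1/4 := by
  have : ‖tf w z‖ = (1/4) * pd z w := by
    rw [tf, norm_mul, abs_mob hw hz]
    norm_num
  rw [this]
  have := pd_lt_one hz hw
  have := pd_nonneg z w
  linarith

lemma tf_selfmap {w : ℂ} (hw : ‖w‖ < 1) : IsSelfMap (tf w) := by
  constructor
  · intro z hz
    have hne : (1 : ℂ) - conj w * z ≠ 0 := one_sub_ne hz hw
    exact (tf_hasDerivAt z hne).differentiableAt.differentiableWithinAt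
  · intro z hz
    have := abs_tf_le hw hz
    simp only [unitDisc, Set.mem_setOf_eq] at *
    linarith

lemma deriv_tf {w : ℂ} (z : ℂ) (hne : (1 : ℂ) - conj w * z ≠ 0) :
    deriv (tf w) z = (1/4 : ℂ) * ((1 - conj w * w) / (1 - conj w * z)^2) :=
  (tf_hasDerivAt z hne).deriv

lemma hypDeriv_tf_w {w : ℂ} (hw : ‖w‖ < 1) :
    hypDeriv (tf w) w = 1/4 := by
  have hne : (1 : ℂ) - conj w * w ≠ 0 := one_sub_ne hw hw
  have h0 : tf w w = 0 := by simp [tf, mob]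
  rw [hypDeriv, deriv_tf w hne, h0, cast_abs_sq]
  simp only [norm_zero]
  norm_num
  field_simp

lemma abs_hypDeriv_tf_le {w : ℂ} (hw : ‖w‖ < 1) {z : ℂ} (hz : ‖z‖ < 1) :
    ‖hypDeriv (tf w) z‖ ≤ 2 / (1 - ‖w‖)^2 := by
  have hne : (1 : ℂ) - conj w * z ≠ 0 := one_sub_ne hz hw
  have hfz := abs_tf_le hw hz
  have hA : ‖1 - ((‖z‖ : ℝ) : ℂ)^2‖ ≤ 1 := by
    rw [abs_one_sub_abs_sq hz]
    nlinarith [norm_nonneg z]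
  have hB : ‖1 - ((‖tf w z‖ : ℝ) : ℂ)^2‖ ≥ 15/16 := by
    rw [abs_one_sub_abs_sq (by linarith : ‖tf w z‖ < 1)]
    nlinarith [norm_nonneg (tf w z)]
  have hw1 : 0 < 1 - ‖w‖ := by linarith
  have hD : ‖deriv (tf w) z‖ ≤ (1/2) / (1 - ‖w‖)^2 := by
    have e : ‖deriv (tf w) z‖
        = (1/4) * (‖1 - conj w * w‖ / ‖1 - conj w * z‖^2) := by
      rw [deriv_tf z hne]
      simp only [norm_mul, norm_div, norm_pow, norm_one, Complex.norm_ofNat]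
    have h1 : ‖1 - conj w * w‖ ≤ 2 := by
      have := norm_sub_le (1 : ℂ) (conj w * w)
      simp only [norm_one, norm_mul, Complex.norm_conj] at this
      nlinarith [norm_nonneg w]
    have h2 : 1 - ‖w‖ ≤ ‖1 - conj w * z‖ := by
      have h3 := norm_sub_norm_le (1 : ℂ) (conj w * z)
      simp only [norm_one, norm_mul, Complex.norm_conj] at h3
      nlinarith [norm_nonneg w, norm_nonneg z, hz.le]
    have h4 : (1 - ‖w‖)^2 ≤ ‖1 - conj w * z‖^2 :=
      pow_le_pow_left₀ hw1.le h2 2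
    rw [e]
    have h5 : ‖1 - conj w * w‖ / ‖1 - conj w * z‖^2
        ≤ 2 / (1 - ‖w‖)^2 :=
      div_le_div₀ (by norm_num) h1 (by positivity) h4
    calc (1/4) * (‖1 - conj w * w‖ / ‖1 - conj w * z‖^2)
        ≤ (1/4) * (2 / (1 - ‖w‖)^2) := by linarith
      _ ≤ (1/2) / (1 - ‖w‖)^2 := le_of_eq (by ring)
  have e2 : ‖hypDeriv (tf w) z‖
      = ‖1 - ((‖z‖ : ℝ) : ℂ)^2‖ * ‖deriv (tf w) z‖
        / ‖1 - ((‖tf w z‖ : ℝ) : ℂ)^2‖ := by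
    rw [hypDeriv, norm_div, norm_mul]
  rw [e2]
  have hDnn := norm_nonneg (deriv (tf w) z)
  have hden : (0:ℝ) < 15/16 := by norm_num
  calc ‖1 - ((‖z‖ : ℝ) : ℂ)^2‖ * ‖deriv (tf w) z‖
        / ‖1 - ((‖tf w z‖ : ℝ) : ℂ)^2‖
      ≤ (1 * ((1/2) / (1 - ‖w‖)^2)) / (15/16) := by
        apply div_le_div₀ (by positivity) _ hden hB
        exact mul_le_mul hA hD hDnn (by norm_num)
    _ = (8/15) / (1 - ‖w‖)^2 := by ring
    _ ≤ 2 / (1 - ‖w‖)^2 :=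
        div_le_div₀ (by norm_num) (by norm_num) (by positivity) le_rfl

lemma Nf_tf_ge {w : ℂ} (hw : ‖w‖ < 1) : (1/4 : ℝ) ≤ Nf (tf w) := by
  have hwd : w ∈ unitDisc := hw
  have hb : BddAbove (Set.range fun z => ⨆ _ : z ∈ unitDisc, ‖hypDeriv (tf w) z‖) := by
    refine ⟨max (2 / (1 - ‖w‖)^2) 0, ?_⟩
    rintro x ⟨z, rfl⟩
    by_cases hz : z ∈ unitDisc
    · show (⨆ _ : z ∈ unitDisc, ‖hypDeriv (tf w) z‖) ≤ _
      rw [ciSup_pos hz]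
      exact le_max_of_le_left (abs_hypDeriv_tf_le hw hz)
    · show (⨆ _ : z ∈ unitDisc, ‖hypDeriv (tf w) z‖) ≤ _
      haveI : IsEmpty (z ∈ unitDisc) := by simpa using hz
      rw [Real.iSup_of_isEmpty]
      exact le_max_right _ _
  have key : (fun z => ⨆ _ : z ∈ unitDisc, ‖hypDeriv (tf w) z‖) w = 1/4 := by
    show (⨆ _ : w ∈ unitDisc, ‖hypDeriv (tf w) w‖) = 1/4
    rw [ciSup_pos hwd, hypDeriv_tf_w hw]
    norm_num
  rw [Nf]
  calc (1/4 : ℝ) = (fun z => ⨆ _ : z ∈ unitDisc, ‖hypDeriv (tf w) z‖) w := key.symm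
    _ ≤ ⨆ z, ⨆ _ : z ∈ unitDisc, ‖hypDeriv (tf w) z‖ := le_ciSup hb w

lemma pd_scale (u v : ℂ) :
    pd ((1/4 : ℂ) * u) ((1/4 : ℂ) * v)
      = (1/4) * ‖u - v‖ / ‖1 - (1/16 : ℂ) * (conj v * u)‖ := by
  unfold pd
  rw [norm_div]
  have e1 : (1/4 : ℂ) * u - (1/4 : ℂ) * v = (1/4 : ℂ) * (u - v) := by ring
  have e2 : (1 : ℂ) - conj ((1/4 : ℂ) * v) * ((1/4 : ℂ) * u)
      = 1 - (1/16 : ℂ) * (conj v * u) := by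
    simp only [map_mul, map_div₀, map_one, map_ofNat]
    ring
  rw [e1, e2, norm_mul]
  norm_num [Complex.norm_ofNat]

lemma pd_small {x y : ℂ} (hx : ‖x‖ ≤ 1/4) (hy : ‖y‖ ≤ 1/4) :
    pd x y ≤ 8/15 := by
  unfold pd
  rw [norm_div]
  have h1 : ‖x - y‖ ≤ 1/2 := by
    have := norm_sub_le x y
    linarith
  have h2 : (15/16 : ℝ) ≤ ‖1 - conj y * x‖ := by
    have h3 := norm_sub_norm_le (1 : ℂ) (conj y * x)
    simp only [norm_one, norm_mul, Complex.norm_conj] at h3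
    nlinarith [norm_nonneg x, norm_nonneg y]
  calc ‖x - y‖ / ‖1 - conj y * x‖ ≤ (1/2) / (15/16) :=
        div_le_div₀ (by norm_num) h1 (by norm_num) h2
    _ = 8/15 := by norm_num

lemma one_sub_sq_le {a b : ℂ} (hρ : pd a b < 1) {R : ℝ} (hR : R ≤ hd a b) :
    1 - (pd a b)^2 ≤ 4 * Real.exp (-R) := by
  have h0 := pd_nonneg a b
  set ρ := pd a b
  have h1 : 0 < 1 - ρ := by linarith
  have h2 : Real.exp R ≤ (1 + ρ) / (1 - ρ) := by
    rw [← Real.le_log_iff_exp_le (by positivity)]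
    exact hR
  have h3 : (1 - ρ) * Real.exp R ≤ 1 + ρ := by
    rw [le_div_iff₀ h1] at h2
    linarith
  have h4 : 0 < Real.exp R := Real.exp_pos R
  have h5 : 1 - ρ ≤ 2 * Real.exp (-R) := by
    rw [Real.exp_neg]
    have h6 : (1 - ρ) * Real.exp R ≤ 2 := by linarith
    calc 1 - ρ = ((1 - ρ) * Real.exp R) * (Real.exp R)⁻¹ := by field_simp
      _ ≤ 2 * (Real.exp R)⁻¹ := mul_le_mul_of_nonneg_right h6 (by positivity)
  nlinarith [Real.exp_pos (-R)]

lemma one_sub_pd_ge {a b : ℂ} (hρ : pd a b < 1) {T : ℝ} (hT : hd a b < T) :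
    Real.exp (-T) ≤ 1 - pd a b := by
  have h0 := pd_nonneg a b
  set ρ := pd a b
  have h1 : 0 < 1 - ρ := by linarith
  have h2 : (1 + ρ) / (1 - ρ) < Real.exp T := by
    rw [← Real.log_lt_iff_lt_exp (by positivity)]
    exact hT
  have h3 : 1 + ρ < Real.exp T * (1 - ρ) := by
    rw [div_lt_iff₀ h1] at h2
    linarith
  have h4 : 0 < Real.exp T := Real.exp_pos T
  rw [Real.exp_neg]
  have h6 : (Real.exp T)⁻¹ * Real.exp T = 1 := inv_mul_cancel₀ h4.ne'
  nlinarith [mul_le_mul_of_nonneg_right h3.le (inv_nonneg.mpr h4.le)]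




set_option maxHeartbeats 2000000 in
lemma pair_bound {C T R : ℝ} {w a b : ℂ}
    (hC0 : 0 < C) (hC1 : C < 1)
    (hTdef : T = 24 / C) (hRdef : R = T + Real.log (88 / C))
    (hw : ‖w‖ < 1) (ha : ‖a‖ < 1) (hb : ‖b‖ < 1)
    (hfa : R ≤ hd w a) :
    hd (tf w a) (tf w b) / hd a b ≤ C / 8 := by
  have hT : 0 < T := by rw [hTdef]; positivity
  have hexpR : Real.exp (-R) = Real.exp (-T) * (C / 88) := by
    rw [hRdef, neg_add, Real.exp_add, Real.exp_neg (Real.log (88 / C)),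
      Real.exp_log (by positivity)]
    field_simp
  have hexpT1 : Real.exp (-T) ≤ 1 := Real.exp_le_one_iff.mpr (by linarith)
  by_cases hab : a = b
  · rw [hab, hd_self]
    simp
    positivity
  set u := mob w a with hudef
  set v := mob w b with hvdef
  have hu1 : ‖u‖ < 1 := by
    rw [hudef, abs_mob hw ha]; exact pd_lt_one ha hw
  have hv1 : ‖v‖ < 1 := by
    rw [hvdef, abs_mob hw hb]; exact pd_lt_one hb hw
  have hfa1 : ‖tf w a‖ ≤ 1/4 := abs_tf_le hw ha
  have hfb1 : ‖tf w b‖ ≤ 1/4 := abs_tf_le hw hb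
  have hnum_lt1 : pd (tf w a) (tf w b) < 1 :=
    pd_lt_one (by linarith) (by linarith)
  have hnum_small : pd (tf w a) (tf w b) ≤ 8/15 := pd_small hfa1 hfb1
  have hnum5 : hd (tf w a) (tf w b) ≤ 5 * pd (tf w a) (tf w b) := hd_le_five hnum_small
  have hnum_nonneg : 0 ≤ hd (tf w a) (tf w b) := hd_nonneg hnum_lt1
  have hρ0_lt1 : pd a b < 1 := pd_lt_one ha hb
  have hρ0_pos : 0 < pd a b := by
    rw [pd]
    apply norm_pos_iff.mpr
    exact div_ne_zero (sub_ne_zero.mpr hab) (one_sub_ne ha hb)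
  have hden : pd a b ≤ hd a b := hd_ge_pd hρ0_lt1
  by_cases hcase : T ≤ hd a b
  · -- far apart case
    have h1 : hd (tf w a) (tf w b) ≤ 3 := by
      calc hd (tf w a) (tf w b) ≤ 5 * pd (tf w a) (tf w b) := hnum5
        _ ≤ 5 * (8/15) := by linarith
        _ ≤ 3 := by norm_num
    have h2 : hd (tf w a) (tf w b) / hd a b ≤ 3 / T :=
      div_le_div₀ (by norm_num) h1 hT hcase
    have h3 : 3 / T = C / 8 := by
      rw [hTdef]
      field_simp
      ring
    linarith
  -- close case
  push_neg at hcase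
  have hTub : Real.exp (-T) ≤ 1 - pd a b := one_sub_pd_ge hρ0_lt1 hcase
  have hinv : pd a b = ‖u - v‖ / ‖1 - conj v * u‖ := by
    rw [← pd_mob hw ha hb, pd, norm_div]
  have hvu_ne : ‖1 - conj v * u‖ ≠ 0 :=
    norm_ne_zero_iff.mpr (one_sub_ne hu1 hv1)
  have huv_eq : ‖u - v‖ = pd a b * ‖1 - conj v * u‖ := by
    rw [hinv]
    rw [div_mul_cancel₀ _ hvu_ne]
  have hu_sq : 1 - (‖u‖)^2 ≤ 4 * Real.exp (-R) := by
    have h1 : ‖u‖ = pd w a := by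
      rw [hudef, abs_mob hw ha, pd_symm]
    rw [h1]
    exact one_sub_sq_le (pd_lt_one hw ha) hfa
  have hbr_le : ‖1 - conj v * u‖
      ≤ (1 - (‖u‖)^2) + ‖u - v‖ := by
    have e : (1 : ℂ) - conj v * u = (1 - conj u * u) + (conj u - conj v) * u := by ring
    rw [e]
    have h1 : ‖1 - conj u * u‖ = 1 - (‖u‖)^2 := by
      rw [← cast_abs_sq]
      exact abs_one_sub_abs_sq hu1
    have h2 : ‖(conj u - conj v) * u‖ ≤ ‖u - v‖ := by
      rw [norm_mul]
      have e2 : conj u - conj v = conj (u - v) := by rw [map_sub]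
      rw [e2, Complex.norm_conj]
      nlinarith [norm_nonneg (u - v), norm_nonneg u, hu1.le]
    calc ‖(1 - conj u * u) + (conj u - conj v) * u‖
        ≤ ‖1 - conj u * u‖ + ‖(conj u - conj v) * u‖ := by
          have := norm_add_le ((1:ℂ) - conj u * u) ((conj u - conj v) * u)
          simpa using this
      _ ≤ (1 - (‖u‖)^2) + ‖u - v‖ := by rw [h1]; linarith
  have hexpTpos := Real.exp_pos (-T)
  have huv_small : ‖u - v‖ ≤ C / 22 := by
    have hA0 : 0 ≤ 1 - (‖u‖)^2 := by
      nlinarith [norm_nonneg u, hu1.le]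
    have h1 : ‖u - v‖ * (1 - pd a b) ≤ pd a b * (1 - (‖u‖)^2) := by
      have h0 := mul_le_mul_of_nonneg_left hbr_le (pd_nonneg a b)
      nlinarith [h0, huv_eq]
    have h2 : ‖u - v‖ * Real.exp (-T) ≤ (C/22) * Real.exp (-T) := by
      calc ‖u - v‖ * Real.exp (-T)
          ≤ ‖u - v‖ * (1 - pd a b) :=
            mul_le_mul_of_nonneg_left hTub (norm_nonneg (u - v))
        _ ≤ pd a b * (1 - (‖u‖)^2) := h1
        _ ≤ 1 - (‖u‖)^2 := by nlinarith [hA0, hρ0_lt1, pd_nonneg a b]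
        _ ≤ 4 * Real.exp (-R) := hu_sq
        _ = (C/22) * Real.exp (-T) := by rw [hexpR]; ring
    exact le_of_mul_le_mul_right h2 hexpTpos
  have hbr_small : ‖1 - conj v * u‖ ≤ C / 11 := by
    have h1 : 1 - (‖u‖)^2 ≤ C / 22 := by
      calc 1 - (‖u‖)^2 ≤ 4 * Real.exp (-R) := hu_sq
        _ = (C/22) * Real.exp (-T) := by rw [hexpR]; ring
        _ ≤ C / 22 := by nlinarith
    calc ‖1 - conj v * u‖ ≤ (1 - (‖u‖)^2) + ‖u - v‖ :=
          hbr_le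
      _ ≤ C/22 + C/22 := by linarith
      _ = C/11 := by ring
  have hρ1 : pd (tf w a) (tf w b) ≤ (4/15) * ‖u - v‖ := by
    have e : pd (tf w a) (tf w b)
        = (1/4) * ‖u - v‖ / ‖1 - (1/16 : ℂ) * (conj v * u)‖ := by
      have ea : tf w a = (1/4 : ℂ) * u := rfl
      have eb : tf w b = (1/4 : ℂ) * v := rfl
      rw [ea, eb, pd_scale]
    rw [e]
    have h2 : (15/16 : ℝ) ≤ ‖1 - (1/16 : ℂ) * (conj v * u)‖ := by
      have h3 := norm_sub_norm_le (1 : ℂ) ((1/16 : ℂ) * (conj v * u))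
      simp only [norm_one, norm_mul, Complex.norm_conj, norm_div,
        map_one, Complex.norm_ofNat] at h3
      nlinarith [norm_nonneg u, norm_nonneg v, hu1.le, hv1.le]
    calc (1/4) * ‖u - v‖ / ‖1 - (1/16 : ℂ) * (conj v * u)‖
        ≤ (1/4) * ‖u - v‖ / (15/16) := by
          apply div_le_div₀ (by positivity) le_rfl (by norm_num) h2
      _ = (4/15) * ‖u - v‖ := by ring
  have hρ1' : pd (tf w a) (tf w b) ≤ (4/15) * (C/11) * pd a b := by
    calc pd (tf w a) (tf w b) ≤ (4/15) * ‖u - v‖ := hρ1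
      _ = (4/15) * (pd a b * ‖1 - conj v * u‖) := by rw [huv_eq]
      _ ≤ (4/15) * (C/11) * pd a b := by nlinarith [hρ0_pos.le, hbr_small]
  have hfinal : hd (tf w a) (tf w b) / hd a b ≤ 5 * pd (tf w a) (tf w b) / pd a b :=
    div_le_div₀ (by nlinarith [pd_nonneg (tf w a) (tf w b)]) hnum5 hρ0_pos hden
  have hfinal2 : 5 * pd (tf w a) (tf w b) / pd a b ≤ C / 8 := by
    rw [div_le_iff₀ hρ0_pos]
    nlinarith [hρ0_pos.le]
  linarith
theorem sampling_implies_Rdense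
    (Z : ℕ → ℂ) (hZ : ∀ n, Z n ∈ unitDisc)
    (C : ℝ) (hC0 : 0 < C) (hC1 : C < 1) (hsamp : IsSamplingSeq Z C) :
    ∃ R > 0, ∀ z₀ ∈ unitDisc, ∀ r, R < r → ∃ n, hd z₀ (Z n) < r := by
  by_contra hcon
  push_neg at hcon
  set T : ℝ := 24 / C with hTdef
  have hT : 0 < T := by positivity
  have hlogpos : 0 < Real.log (88 / C) := by
    apply Real.log_pos
    rw [lt_div_iff₀ hC0]
    linarith
  set R : ℝ := T + Real.log (88 / C) with hRdef
  have hR : 0 < R := by positivity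
  obtain ⟨w, hwD, r, hrR, hfar⟩ := hcon R hR
  have hw : ‖w‖ < 1 := hwD
  have hfar' : ∀ n, R ≤ hd w (Z n) := fun n => le_trans hrR.le (hfar n)
  have hself := tf_selfmap hw
  have hNf := Nf_tf_ge hw
  have hs := hsamp (tf w) hself
  have hbound : sampSup Z (tf w) ≤ C / 8 := by
    apply Real.sSup_le _ (by positivity)
    rintro t ⟨n, m, hnm, rfl⟩
    exact pair_bound hC0 hC1 hTdef hRdef hw (hZ n) (hZ m) (hfar' n)
  have hNfC : C / 4 ≤ C * Nf (tf w) := by nlinarith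
  linarith
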